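/- Let ω ∈ ℂ be a primitive k-th root of unity, k ≥ 2, and suppose n ≥ 2 with a ∈ ℂ, a ≠ 0. The diagonal matrix diag(a, a⁻¹) ∈ SL_2(ℂ) is a product of two matrices of finite order k, provided a ∉ {0, 1, −1}. -/

import Mathlib

/-- If `A + B = 1`, `A*X = ω•A`, `B*X = ω⁻¹•B`, and `ω^k = 1`, then `X^k = 1`. -/
lemma key_pow_aux (k : ℕ) (ω : ℂ) (hωk : ω ^ k = 1)
    (X A B : Matrix (Fin 2) (Fin 2) ℂ) (hAB : A + B = 1)
    (hA : A * X = ω • A) (hB : B * X = ω⁻¹ • B) : X ^ k = 1 := by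
  have hpow : ∀ n, X ^ n = (ω ^ n) • A + (ω⁻¹ ^ n) • B := by
    intro n
    induction n with
    | zero => simpa using hAB.symm
    | succ n ih =>
      rw [pow_succ, ih, add_mul, Matrix.smul_mul, Matrix.smul_mul, hA, hB,
        smul_smul, smul_smul, pow_succ, pow_succ]
  rw [hpow k, hωk, inv_pow, hωk, inv_one, one_smul, one_smul, hAB]

lemma key_pow (k : ℕ) (ω : ℂ) (hωk : ω ^ k = 1) (hω0 : ω ≠ 0) (hne : ω ≠ ω⁻¹)
    (X : Matrix (Fin 2) (Fin 2) ℂ) (hX : X * X = (ω + ω⁻¹) • X - 1) : X ^ k = 1 := by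
  have hs : ω - ω⁻¹ ≠ 0 := sub_ne_zero.2 hne
  apply key_pow_aux k ω hωk X
    ((ω - ω⁻¹)⁻¹ • (X - ω⁻¹ • (1 : Matrix (Fin 2) (Fin 2) ℂ)))
    ((ω - ω⁻¹)⁻¹ • (ω • (1 : Matrix (Fin 2) (Fin 2) ℂ) - X))
  case hAB =>
    have h2 : ω * ω - 1 ≠ 0 := by
      intro h
      exact hne (eq_inv_of_mul_eq_one_left (by linear_combination h))
    have h3 : -1 + ω ^ 2 ≠ 0 := by intro h; exact h2 (by linear_combination h)
    match_scalars <;> field_simp <;> ring_nf <;> field_simp <;> ring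
  case hA =>
    have h2 : ω * ω - 1 ≠ 0 := by
      intro h
      exact hne (eq_inv_of_mul_eq_one_left (by linear_combination h))
    rw [Matrix.smul_mul, Matrix.sub_mul, Matrix.smul_mul, Matrix.one_mul, hX]
    match_scalars <;> field_simp <;> ring
  case hB =>
    have h2 : ω * ω - 1 ≠ 0 := by
      intro h
      exact hne (eq_inv_of_mul_eq_one_left (by linear_combination h))
    rw [Matrix.smul_mul, Matrix.sub_mul, Matrix.smul_mul, Matrix.one_mul, hX]
    match_scalars <;> field_simp <;> ring

noncomputable def Xmat (t a : ℂ) : Matrix (Fin 2) (Fin 2) ℂ :=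
  !![t*a/(1+a), 1; (t*a/(1+a))*(t - t*a/(1+a)) - 1, t - t*a/(1+a)]

noncomputable def Ymat (t a : ℂ) : Matrix (Fin 2) (Fin 2) ℂ :=
  !![(t - t*a/(1+a)) * a, -a⁻¹;
     -(((t*a/(1+a))*(t - t*a/(1+a)) - 1) * a), (t*a/(1+a)) * a⁻¹]

lemma Xmat_sq (t a : ℂ) (ha : a ≠ 0) (h1a : 1 + a ≠ 0) :
    Xmat t a * Xmat t a = t • Xmat t a - 1 := by
  ext i j
  fin_cases i <;> fin_cases j <;>
    (simp [Xmat, Matrix.mul_apply, Fin.sum_univ_two, Matrix.one_apply];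
     try field_simp) <;> ring

lemma Ymat_sq (t a : ℂ) (ha : a ≠ 0) (h1a : 1 + a ≠ 0) :
    Ymat t a * Ymat t a = t • Ymat t a - 1 := by
  ext i j
  fin_cases i <;> fin_cases j <;>
    (simp [Ymat, Matrix.mul_apply, Fin.sum_univ_two, Matrix.one_apply];
     try field_simp) <;> ring

lemma Xmat_mul_Ymat (t a : ℂ) (ha : a ≠ 0) (h1a : 1 + a ≠ 0) :
    Xmat t a * Ymat t a = !![a, 0; 0, a⁻¹] := by
  ext i j
  fin_cases i <;> fin_cases j <;>
    (simp [Xmat, Ymat, Matrix.mul_apply, Fin.sum_univ_two];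
     try field_simp) <;> ring

theorem stmt_14 (k : ℕ) (hk : 2 ≤ k) (ω : ℂ) (hω : IsPrimitiveRoot ω k)
    (a : ℂ) (ha0 : a ≠ 0) (ha1 : a ≠ 1) (ham1 : a ≠ -1) :
    ∃ X Y : Matrix (Fin 2) (Fin 2) ℂ,
      X ^ k = 1 ∧ Y ^ k = 1 ∧ (!![a, 0; 0, a⁻¹] : Matrix (Fin 2) (Fin 2) ℂ) = X * Y := by
  have hωk : ω ^ k = 1 := hω.pow_eq_one
  have hω0 : ω ≠ 0 := by
    intro h; rw [h, zero_pow (by omega)] at hωk; exact zero_ne_one hωk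
  have h1a : 1 + a ≠ 0 := by
    intro h; exact ham1 (by linear_combination h)
  by_cases hne : ω = ω⁻¹
  · -- then ω = -1 and k = 2
    have hsq : ω * ω = 1 := by nth_rewrite 2 [hne]; exact mul_inv_cancel₀ hω0
    have hk2 : k = 2 := by
      have hd : k ∣ 2 := hω.dvd_of_pow_eq_one 2 (by rw [pow_two, hsq])
      have := Nat.le_of_dvd (by norm_num) hd
      omega
    subst hk2
    refine ⟨!![0, 1; 1, 0], !![0, a⁻¹; a, 0], ?_, ?_, ?_⟩
    · rw [pow_two]
      ext i j
      fin_cases i <;> fin_cases j <;>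
        simp [Matrix.mul_apply, Fin.sum_univ_two, Matrix.one_apply]
    · rw [pow_two]
      ext i j
      fin_cases i <;> fin_cases j <;>
        simp [Matrix.mul_apply, Fin.sum_univ_two, Matrix.one_apply,
          mul_inv_cancel₀ ha0, inv_mul_cancel₀ ha0]
    · ext i j
      fin_cases i <;> fin_cases j <;>
        simp [Matrix.mul_apply, Fin.sum_univ_two]
  · refine ⟨Xmat (ω + ω⁻¹) a, Ymat (ω + ω⁻¹) a, ?_, ?_, ?_⟩
    · exact key_pow k ω hωk hω0 hne _ (Xmat_sq _ _ ha0 h1a)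
    · exact key_pow k ω hωk hω0 hne _ (Ymat_sq _ _ ha0 h1a)
    · exact (Xmat_mul_Ymat _ _ ha0 h1a).symm
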